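/- Let R be a principal ideal domain, V a finitely generated free R-module, and R' ⊆ V⊗V a free rank-1 submodule generated by a non-singular anti-symmetric element. Then the quadratic algebra A(V,R') = T_R(V)/(R') is a free R-module. -/

import Mathlib

open TensorProduct CategoryTheory

noncomputable section
universe u

/-- The linear map `V ⊗ V → T(V)` sending `v ⊗ w` to `ι v * ι w`. -/
def muMap (k : Type*) [CommRing k] (V : Type*) [AddCommGroup V] [Module k V] :
    V ⊗[k] V →ₗ[k] TensorAlgebra k V :=
  TensorProduct.lift
    (((LinearMap.mul k (TensorAlgebra k V)).compl₂ (TensorAlgebra.ι k)) ∘ₗ TensorAlgebra.ι k)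

/-- The relation presenting the quadratic algebra `A(V,R) = T(V)/(R)`. -/
def quadRel (k : Type*) [CommRing k] (V : Type*) [AddCommGroup V] [Module k V]
    (R : Submodule k (V ⊗[k] V)) : TensorAlgebra k V → TensorAlgebra k V → Prop :=
  fun x y => (∃ r ∈ R, x = muMap k V r) ∧ y = 0

/-- The quadratic algebra `A(V,R) = T(V)/(R)`. -/
def QuadAlg (k : Type*) [CommRing k] (V : Type*) [AddCommGroup V] [Module k V]
    (R : Submodule k (V ⊗[k] V)) : Type _ :=
  RingQuot (quadRel k V R)

instance (k : Type*) [CommRing k] (V : Type*) [AddCommGroup V] [Module k V]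
    (R : Submodule k (V ⊗[k] V)) : Ring (QuadAlg k V R) := by
  unfold QuadAlg; infer_instance

instance (k : Type*) [CommRing k] (V : Type*) [AddCommGroup V] [Module k V]
    (R : Submodule k (V ⊗[k] V)) : Algebra k (QuadAlg k V R) := by
  unfold QuadAlg; infer_instance

/-- The quotient map `T(V) → A(V,R)`. -/
def quadMk (k : Type*) [CommRing k] (V : Type*) [AddCommGroup V] [Module k V]
    (R : Submodule k (V ⊗[k] V)) : TensorAlgebra k V →ₐ[k] QuadAlg k V R :=
  RingQuot.mkAlgHom k (quadRel k V R)



set_option linter.unusedSectionVars false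
open Module
namespace QuadAux

variable {R : Type*} [CommRing R] {ι : Type*} [Fintype ι] [DecidableEq ι]

/-- Words avoiding the adjacent pair `(p, q)`. -/
def Nor (p q : ι) (l : List ι) : Prop := l.Chain' fun a b => ¬(a = p ∧ b = q)

instance (p q : ι) : DecidablePred (Nor p q) := fun l => by
  unfold Nor List.Chain'; infer_instance

lemma Nor.nil (p q : ι) : Nor p q [] := List.isChain_nil

lemma nor_tail {p q : ι} {x : ι} {t : List ι} (h : Nor p q (x :: t)) : Nor p q t :=
  List.IsChain.tail h

lemma nor_cons_of_ne {p q i : ι} (hi : i ≠ p) {t : List ι} (ht : Nor p q t) :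
    Nor p q (i :: t) := by
  cases t with
  | nil => simp [Nor, List.Chain']
  | cons y s =>
    exact List.isChain_cons_cons.2 ⟨fun hc => hi hc.1, ht⟩

abbrev MM (R : Type*) [CommRing R] (p q : ι) : Type _ := {l : List ι // Nor p q l} →₀ R

variable (R) in
/-- The basis vector of `MM` at `l`, or `0` if `l` is not normal. -/
def toM (p q : ι) (l : List ι) : MM R p q :=
  if h : Nor p q l then Finsupp.single ⟨l, h⟩ 1 else 0

lemma toM_nor {p q : ι} {l : List ι} (h : Nor p q l) :
    toM R p q l = Finsupp.single ⟨l, h⟩ 1 := dif_pos h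

variable (R) in
/-- Linear extension of prepending the letter `i`. -/
def consM (p q i : ι) : MM R p q →ₗ[R] MM R p q :=
  Finsupp.linearCombination R fun w : {l : List ι // Nor p q l} => toM R p q (i :: w.1)

lemma consM_single {p q i : ι} (w : {l : List ι // Nor p q l}) :
    consM R p q i (Finsupp.single w 1) = toM R p q (i :: w.1) := by
  simp [consM, Finsupp.linearCombination_single]

variable (R) in
def actP (p q : ι) (G' : ι → ι → R) : List ι → MM R p q
  | [] => toM R p q [p]
  | x :: t =>
    if x = q then
      -(∑ i, ∑ j, (if j = p ∨ (i = p ∧ j = q) then 0 else G' i j) • toM R p q (i :: j :: t))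
        - ∑ i, (if i = p then 0 else G' i p) • consM R p q i (actP p q G' t)
    else toM R p q (p :: x :: t)

lemma actP_nil (p q : ι) (G' : ι → ι → R) : actP R p q G' [] = toM R p q [p] := rfl

lemma actP_cons_q (p q : ι) (G' : ι → ι → R) (t : List ι) :
    actP R p q G' (q :: t) =
      -(∑ i, ∑ j, (if j = p ∨ (i = p ∧ j = q) then 0 else G' i j) • toM R p q (i :: j :: t))
        - ∑ i, (if i = p then 0 else G' i p) • consM R p q i (actP R p q G' t) := by
  rw [actP, if_pos rfl]

lemma actP_cons_ne (p q : ι) (G' : ι → ι → R) {x : ι} (hx : x ≠ q) (t : List ι) :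
    actP R p q G' (x :: t) = toM R p q (p :: x :: t) := by
  rw [actP, if_neg hx]

lemma actP_of_nor {p q : ι} (G' : ι → ι → R) {t : List ι} (h : Nor p q (p :: t)) :
    actP R p q G' t = toM R p q (p :: t) := by
  cases t with
  | nil => rfl
  | cons x s =>
    have hx : x ≠ q := by
      rcases List.isChain_cons_cons.1 h with ⟨h1, -⟩
      intro hxq; exact h1 ⟨rfl, hxq⟩
    exact actP_cons_ne p q G' hx s

variable (R) in
def act (p q : ι) (G' : ι → ι → R) (i : ι) : MM R p q →ₗ[R] MM R p q :=
  Finsupp.linearCombination R fun w : {l : List ι // Nor p q l} =>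
    if i = p then actP R p q G' w.1 else toM R p q (i :: w.1)

lemma act_single {p q : ι} (G' : ι → ι → R) (i : ι) (w : {l : List ι // Nor p q l}) :
    act R p q G' i (Finsupp.single w 1) =
      if i = p then actP R p q G' w.1 else toM R p q (i :: w.1) := by
  simp [act, Finsupp.linearCombination_single]

lemma act_eq_consM {p q : ι} (G' : ι → ι → R) {i : ι} (hi : i ≠ p) :
    act R p q G' i = consM R p q i := by
  unfold act consM
  congr 1
  funext w
  rw [if_neg hi]

lemma act_single_nor {p q : ι} (G' : ι → ι → R) {i : ι} {w : {l : List ι // Nor p q l}}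
    (h : Nor p q (i :: w.1)) :
    act R p q G' i (Finsupp.single w 1) = Finsupp.single ⟨i :: w.1, h⟩ 1 := by
  rw [act_single]
  by_cases hi : i = p
  · subst hi
    rw [if_pos rfl, actP_of_nor G' h, toM_nor h]
  · rw [if_neg hi, toM_nor h]

end QuadAux

namespace QuadAux
variable {R : Type*} [CommRing R] {ι : Type*} [Fintype ι] [DecidableEq ι]

lemma key {p q : ι} (hne : p ≠ q) (G' : ι → ι → R) (hpq : G' p q = 1) (hpp : G' p p = 0)
    (w : {l : List ι // Nor p q l}) :
    ∑ i, ∑ j, G' i j • act R p q G' i (act R p q G' j (Finsupp.single w 1)) = 0 := by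
  set E := actP R p q G' (q :: w.1) with hE
  set T1 := ∑ i, ∑ j, (if j = p ∨ (i = p ∧ j = q) then (0:R) else G' i j) •
      toM R p q (i :: j :: w.1) with hT1
  set T2 := ∑ i, (if i = p then (0:R) else G' i p) • consM R p q i (actP R p q G' w.1) with hT2
  have hEeq : E = -T1 - T2 := actP_cons_q p q G' w.1
  have point : ∀ i j, G' i j • act R p q G' i (act R p q G' j (Finsupp.single w 1)) =
      (if j = p ∨ (i = p ∧ j = q) then (0:R) else G' i j) • toM R p q (i :: j :: w.1)
      + (if j = p then (if i = p then (0:R) else G' i p) • consM R p q i (actP R p q G' w.1)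
          else 0)
      + (if i = p ∧ j = q then E else 0) := by
    intro i j
    by_cases hj : j = p
    · rw [hj]
      rw [act_single, if_pos rfl]
      have hc : ¬(i = p ∧ p = q) := fun h => hne h.2
      rw [if_pos (Or.inl rfl), if_pos rfl, if_neg hc, zero_smul, zero_add, add_zero]
      by_cases hi : i = p
      · rw [hi, if_pos rfl, hpp, zero_smul, zero_smul]
      · rw [if_neg hi, act_eq_consM G' hi]
    · have hnor : Nor p q (j :: w.1) := nor_cons_of_ne hj w.2
      rw [act_single G' j w, if_neg hj, toM_nor hnor, act_single G' i ⟨j :: w.1, hnor⟩]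
      by_cases hi : i = p
      · rw [hi, if_pos rfl]
        by_cases hjq : j = q
        · subst hjq
          rw [if_pos (Or.inr ⟨rfl, rfl⟩), if_neg hj, if_pos ⟨rfl, rfl⟩, hpq, one_smul,
            zero_smul, zero_add, zero_add]
        · have hc2 : ¬(p = p ∧ j = q) := fun h => hjq h.2
          rw [actP_cons_ne p q G' hjq, if_neg (by tauto), if_neg hj, if_neg hc2, add_zero,
            add_zero]
      · have hc2 : ¬(i = p ∧ j = q) := fun h => hi h.1
        rw [if_neg hi, if_neg (by tauto), if_neg hj, if_neg hc2, add_zero, add_zero]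
    -- end point
  calc ∑ i, ∑ j, G' i j • act R p q G' i (act R p q G' j (Finsupp.single w 1))
      = T1 + T2 + E := by
        rw [hT1, hT2]
        have : ∀ i : ι, ∑ j, G' i j • act R p q G' i (act R p q G' j (Finsupp.single w 1)) =
            (∑ j, (if j = p ∨ (i = p ∧ j = q) then (0:R) else G' i j) •
              toM R p q (i :: j :: w.1))
            + (if i = p then (0:R) else G' i p) • consM R p q i (actP R p q G' w.1)
            + (if i = p then E else 0) := by
          intro i
          rw [Finset.sum_congr rfl fun j _ => point i j]
          rw [Finset.sum_add_distrib, Finset.sum_add_distrib]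
          congr 1
          · congr 1
            rw [Finset.sum_ite_eq' Finset.univ p
              (fun _ => (if i = p then (0:R) else G' i p) • consM R p q i (actP R p q G' w.1))]
            simp
          · by_cases hi : i = p
            · simp [hi, Finset.sum_ite_eq']
            · simp [hi]
        rw [Finset.sum_congr rfl fun i _ => this i]
        rw [Finset.sum_add_distrib, Finset.sum_add_distrib]
        congr 1
        rw [Finset.sum_ite_eq' Finset.univ p (fun _ => E)]
        simp
    _ = 0 := by rw [hEeq]; abel
end QuadAux

namespace QuadAux
variable {R : Type*} [CommRing R] {ι : Type*} [Fintype ι] [DecidableEq ι]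
variable {V : Type*} [AddCommGroup V] [Module R V]

def actV (c : Basis ι R V) (p q : ι) (G' : ι → ι → R) : V →ₗ[R] Module.End R (MM R p q) :=
  (Finsupp.linearCombination R (act R p q G')) ∘ₗ (c.repr : V ≃ₗ[R] (ι →₀ R)).toLinearMap

lemma actV_basis (c : Basis ι R V) (p q : ι) (G' : ι → ι → R) (i : ι) :
    actV c p q G' (c i) = act R p q G' i := by
  simp [actV, Finsupp.linearCombination_single]

def rho (c : Basis ι R V) (p q : ι) (G' : ι → ι → R) :
    TensorAlgebra R V →ₐ[R] Module.End R (MM R p q) :=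
  TensorAlgebra.lift R (actV c p q G')

lemma rho_ι (c : Basis ι R V) (p q : ι) (G' : ι → ι → R) (v : V) :
    rho c p q G' (TensorAlgebra.ι R v) = actV c p q G' v := by
  simp [rho]

lemma muMap_tmul (x y : V) :
    muMap R V (x ⊗ₜ[R] y) = TensorAlgebra.ι R x * TensorAlgebra.ι R y := by
  simp [muMap]

lemma rho_word (c : Basis ι R V) (p q : ι) (G' : ι → ι → R) :
    ∀ (l : List ι) (h : Nor p q l),
    rho c p q G' ((l.map fun i => TensorAlgebra.ι R (c i)).prod)
        (Finsupp.single ⟨[], Nor.nil p q⟩ 1) = Finsupp.single ⟨l, h⟩ 1 := by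
  intro l
  induction l with
  | nil => intro h; simp
  | cons a t ih =>
    intro h
    rw [List.map_cons, List.prod_cons, map_mul, Module.End.mul_apply, ih (nor_tail h),
      rho_ι, actV_basis, act_single_nor G' h]

lemma rho_mu (c : Basis ι R V) (p q : ι) (hne : p ≠ q) (G' : ι → ι → R)
    (hpq : G' p q = 1) (hpp : G' p p = 0) (r : V ⊗[R] V)
    (hr' : r = ∑ i, ∑ j, G' i j • (c i ⊗ₜ[R] c j)) :
    rho c p q G' (muMap R V r) = 0 := by
  have h1 : muMap R V r = ∑ i, ∑ j, G' i j •
      (TensorAlgebra.ι R (c i) * TensorAlgebra.ι R (c j)) := by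
    rw [hr']
    simp [map_sum, map_smul, muMap_tmul]
  rw [h1]
  have h2 : rho c p q G' (∑ i, ∑ j, G' i j •
      (TensorAlgebra.ι R (c i) * TensorAlgebra.ι R (c j))) =
      ∑ i, ∑ j, G' i j • (act R p q G' i * act R p q G' j) := by
    simp [map_sum, map_smul, map_mul, rho_ι, actV_basis]
  rw [h2]
  refine Finsupp.basisSingleOne.ext fun w => ?_
  have hb : (Finsupp.basisSingleOne : Basis _ R (MM R p q)) w = Finsupp.single w 1 := rfl
  rw [hb]
  rw [LinearMap.zero_apply]
  rw [LinearMap.sum_apply]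
  calc ∑ i, (∑ j, G' i j • (act R p q G' i * act R p q G' j)) (Finsupp.single w 1)
      = ∑ i, ∑ j, G' i j • act R p q G' i (act R p q G' j (Finsupp.single w 1)) := by
        refine Finset.sum_congr rfl fun i _ => ?_
        rw [LinearMap.sum_apply]
        refine Finset.sum_congr rfl fun j _ => ?_
        rw [LinearMap.smul_apply, Module.End.mul_apply]
    _ = 0 := key hne G' hpq hpp w

end QuadAux

namespace QuadAux
variable {R : Type*} [CommRing R] {ι : Type*} [Fintype ι] [DecidableEq ι]
variable {V : Type*} [AddCommGroup V] [Module R V]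

def ofWord (c : Basis ι R V) (W : Submodule R (V ⊗[R] V)) (l : List ι) : QuadAlg R V W :=
  quadMk R V W ((l.map fun i => TensorAlgebra.ι R (c i)).prod)

lemma ofWord_cons (c : Basis ι R V) (W : Submodule R (V ⊗[R] V)) (i : ι) (l : List ι) :
    ofWord c W (i :: l) = quadMk R V W (TensorAlgebra.ι R (c i)) * ofWord c W l := by
  simp [ofWord, map_mul]

lemma ofWord_append (c : Basis ι R V) (W : Submodule R (V ⊗[R] V)) (l l' : List ι) :
    ofWord c W (l ++ l') = ofWord c W l * ofWord c W l' := by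
  simp [ofWord, map_mul, List.map_append, List.prod_append]

theorem free_main (p q : ι) (hne : p ≠ q) (c : Basis ι R V) (G' : ι → ι → R)
    (hpq : G' p q = 1) (hpp : G' p p = 0) (r : V ⊗[R] V)
    (hr' : r = ∑ i, ∑ j, G' i j • (c i ⊗ₜ[R] c j)) :
    Module.Free R (QuadAlg R V (Submodule.span R {r})) := by
  classical
  set W : Submodule R (V ⊗[R] V) := Submodule.span R {r} with hW
  have hrel : ∀ ⦃x y : TensorAlgebra R V⦄, quadRel R V W x y →
      rho c p q G' x = rho c p q G' y := by
    rintro x y ⟨⟨r', hr'mem, rfl⟩, rfl⟩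
    rw [map_zero]
    rcases Submodule.mem_span_singleton.1 hr'mem with ⟨a, rfl⟩
    have hm : muMap R V (a • r) = a • muMap R V r := (muMap R V).map_smul a r
    have hs : rho c p q G' (a • muMap R V r) = a • rho c p q G' (muMap R V r) :=
      (rho c p q G').toLinearMap.map_smul a _
    rw [hm, hs, rho_mu c p q hne G' hpq hpp r hr', smul_zero]
  let rho' : QuadAlg R V W →ₐ[R] Module.End R (MM R p q) :=
    RingQuot.liftAlgHom R ⟨rho c p q G', hrel⟩
  have hrho' : ∀ x, rho' (quadMk R V W x) = rho c p q G' x := by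
    intro x
    show RingQuot.liftAlgHom R ⟨rho c p q G', hrel⟩
      (RingQuot.mkAlgHom R (quadRel R V W) x) = _
    rw [RingQuot.liftAlgHom_mkAlgHom_apply]
  let e0 : MM R p q := Finsupp.single ⟨[], Nor.nil p q⟩ 1
  let Ψ : QuadAlg R V W →ₗ[R] MM R p q := (LinearMap.applyₗ e0) ∘ₗ rho'.toLinearMap
  let Φ : MM R p q →ₗ[R] QuadAlg R V W :=
    Finsupp.linearCombination R fun w : {l : List ι // Nor p q l} => ofWord c W w.1
  have hΦs : ∀ w : {l : List ι // Nor p q l}, Φ (Finsupp.single w 1) = ofWord c W w.1 := by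
    intro w; simp [Φ, Finsupp.linearCombination_single]
  have hΨo : ∀ (l : List ι), Ψ (ofWord c W l) =
      rho c p q G' ((l.map fun i => TensorAlgebra.ι R (c i)).prod) e0 := by
    intro l
    show LinearMap.applyₗ e0 (rho'.toLinearMap (ofWord c W l)) = _
    rw [AlgHom.toLinearMap_apply]
    rw [show rho' (ofWord c W l) = rho c p q G'
      ((l.map fun i => TensorAlgebra.ι R (c i)).prod) from hrho' _]
    rfl
  have hΨΦ : ∀ w : {l : List ι // Nor p q l},
      Ψ (Φ (Finsupp.single w 1)) = Finsupp.single w 1 := by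
    intro w
    rw [hΦs w, hΨo w.1, rho_word c p q G' w.1 w.2]
  have hcomp : Ψ ∘ₗ Φ = LinearMap.id := by
    refine Finsupp.basisSingleOne.ext fun w => ?_
    simpa using hΨΦ w
  have hinv : ∀ z, Ψ (Φ z) = z := by
    intro z
    have := LinearMap.congr_fun hcomp z
    simpa using this
  have hinj : Function.Injective Φ := by
    intro x y hxy
    have : Ψ (Φ x) = Ψ (Φ y) := by rw [hxy]
    rwa [hinv, hinv] at this
  -- surjectivity
  set N := Submodule.span R
    (Set.range fun w : {l : List ι // Nor p q l} => ofWord c W w.1) with hN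
  have hmemN : ∀ (l : List ι), Nor p q l → ofWord c W l ∈ N := fun l h =>
    Submodule.subset_span ⟨⟨l, h⟩, rfl⟩
  have hsum0 : ∀ t : List ι, ∑ i, ∑ j, G' i j • ofWord c W (i :: j :: t) = 0 := by
    intro t
    have h0 : quadMk R V W (muMap R V r) = 0 := by
      have hq : quadRel R V W (muMap R V r) 0 :=
        ⟨⟨r, Submodule.mem_span_singleton_self r, rfl⟩, rfl⟩
      have h01 : quadMk R V W (muMap R V r) = quadMk R V W 0 :=
        RingQuot.mkAlgHom_rel R hq
      rw [h01, map_zero]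
    have h1 : (∑ i, ∑ j, G' i j •
        (quadMk R V W (TensorAlgebra.ι R (c i) * TensorAlgebra.ι R (c j)))) = 0 := by
      have hmu : muMap R V r = ∑ i, ∑ j, G' i j •
          (TensorAlgebra.ι R (c i) * TensorAlgebra.ι R (c j)) := by
        rw [hr']; simp [map_sum, map_smul, muMap_tmul]
      rw [← h0, hmu]
      simp [map_sum, map_smul]
    have h2 := congrArg (fun z => z * ofWord c W t) h1
    simp only [zero_mul] at h2
    rw [← h2]
    erw [Finset.sum_mul]
    refine Finset.sum_congr rfl fun i _ => ?_
    erw [Finset.sum_mul]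
    refine Finset.sum_congr rfl fun j _ => ?_
    rw [ofWord_cons, ofWord_cons, smul_mul_assoc, map_mul, mul_assoc]
  have mulGen : ∀ i : ι, i ≠ p → ∀ z ∈ N, quadMk R V W (TensorAlgebra.ι R (c i)) * z ∈ N := by
    intro i hi z hz
    induction hz using Submodule.span_induction with
    | mem x hx =>
      obtain ⟨w, rfl⟩ := hx
      rw [← ofWord_cons]
      exact hmemN _ (nor_cons_of_ne hi w.2)
    | zero => rw [mul_zero]; exact N.zero_mem
    | add x y hx hy ihx ihy => rw [mul_add]; exact N.add_mem ihx ihy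
    | smul a x hx ihx => rw [mul_smul_comm]; exact N.smul_mem a ihx
  have claim : ∀ n : ℕ, ∀ t : List ι, Nor p q t → t.length ≤ n → ∀ i : ι,
      ofWord c W (i :: t) ∈ N := by
    intro n
    induction n with
    | zero =>
      intro t ht hlen i
      have ht0 : t = [] := List.length_eq_zero_iff.1 (Nat.le_zero.1 hlen)
      subst ht0
      exact hmemN [i] (by simp [Nor, List.Chain'])
    | succ n ih =>
      intro t ht hlen i
      by_cases hnor : Nor p q (i :: t)
      · exact hmemN _ hnor
      · have hip : i = p ∧ ∃ t', t = q :: t' := by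
          cases t with
          | nil => exact absurd (by simp [Nor, List.Chain']) hnor
          | cons x s =>
            by_cases h1 : i = p
            · by_cases h2 : x = q
              · exact ⟨h1, s, by rw [h2]⟩
              · exact absurd (List.isChain_cons_cons.2 ⟨fun hc => h2 hc.2, ht⟩) hnor
            · exact absurd (nor_cons_of_ne h1 ht) hnor
        obtain ⟨hip1, t', rfl⟩ := hip
        rw [hip1]
        have h2 := hsum0 t'
        rw [← Finset.sum_product'] at h2
        have h3 := Finset.add_sum_erase (Finset.univ ×ˢ Finset.univ)
          (fun x : ι × ι => G' x.1 x.2 • ofWord c W (x.1 :: x.2 :: t'))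
          (show ((p, q) : ι × ι) ∈ Finset.univ ×ˢ Finset.univ by simp)
        rw [h2] at h3
        have h4 : ofWord c W (p :: q :: t') =
            -∑ x ∈ (Finset.univ ×ˢ Finset.univ).erase (p, q),
              G' x.1 x.2 • ofWord c W (x.1 :: x.2 :: t') := by
          have h5 := eq_neg_of_add_eq_zero_left h3
          simp only [hpq, one_smul] at h5
          exact h5
        rw [h4]
        refine N.neg_mem (Submodule.sum_mem N fun x hx => ?_)
        obtain ⟨i', j'⟩ := x
        have hxne : ¬(i' = p ∧ j' = q) := by
          rintro ⟨ha, hb⟩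
          exact (Finset.mem_erase.1 hx).1 (by rw [ha, hb])
        have ht' : Nor p q t' := nor_tail ht
        by_cases hj' : j' = p
        · by_cases hi' : i' = p
          · rw [hi', hj', hpp, zero_smul]; exact N.zero_mem
          · rw [hj']
            refine N.smul_mem _ ?_
            rw [ofWord_cons]
            refine mulGen i' hi' _ ?_
            refine ih t' ht' ?_ p
            have := hlen
            simp only [List.length_cons, Nat.succ_le_succ_iff] at this
            exact this
        · refine N.smul_mem _ (hmemN _ ?_)
          exact List.isChain_cons_cons.2 ⟨hxne, nor_cons_of_ne hj' ht'⟩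
  have mulGen' : ∀ i : ι, ∀ z ∈ N, quadMk R V W (TensorAlgebra.ι R (c i)) * z ∈ N := by
    intro i z hz
    induction hz using Submodule.span_induction with
    | mem x hx =>
      obtain ⟨w, rfl⟩ := hx
      rw [← ofWord_cons]
      exact claim w.1.length w.1 w.2 le_rfl i
    | zero => rw [mul_zero]; exact N.zero_mem
    | add x y hx hy ihx ihy => rw [mul_add]; exact N.add_mem ihx ihy
    | smul a x hx ihx => rw [mul_smul_comm]; exact N.smul_mem a ihx
  have allW : ∀ l : List ι, ofWord c W l ∈ N := by
    intro l
    induction l with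
    | nil => exact hmemN [] (Nor.nil p q)
    | cons i t ih => rw [ofWord_cons]; exact mulGen' i _ ih
  have mulN : ∀ x ∈ N, ∀ y ∈ N, x * y ∈ N := by
    intro x hx
    induction hx using Submodule.span_induction with
    | mem z hz =>
      obtain ⟨w, rfl⟩ := hz
      intro y hy
      induction hy using Submodule.span_induction with
      | mem z' hz' =>
        obtain ⟨w', rfl⟩ := hz'
        rw [← ofWord_append]
        exact allW _
      | zero => rw [mul_zero]; exact N.zero_mem
      | add y₁ y₂ h1 h2 ih1 ih2 => rw [mul_add]; exact N.add_mem ih1 ih2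
      | smul a y₁ h1 ih1 => rw [mul_smul_comm]; exact N.smul_mem a ih1
    | zero => intro y hy; rw [zero_mul]; exact N.zero_mem
    | add x₁ x₂ h1 h2 ih1 ih2 => intro y hy; rw [add_mul]; exact N.add_mem (ih1 y hy) (ih2 y hy)
    | smul a x₁ h1 ih1 => intro y hy; rw [smul_mul_assoc]; exact N.smul_mem a (ih1 y hy)
  have htop : ∀ x : TensorAlgebra R V, quadMk R V W x ∈ N := by
    intro x
    induction x using TensorAlgebra.induction with
    | algebraMap a =>
      have h1 : quadMk R V W (algebraMap R _ a) = a • ofWord c W [] := by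
        have : (algebraMap R (TensorAlgebra R V) a) = a • (1 : TensorAlgebra R V) := by
          rw [Algebra.algebraMap_eq_smul_one]
        rw [this, map_smul]
        congr 1
      rw [h1]
      exact N.smul_mem a (hmemN [] (Nor.nil p q))
    | ι v =>
      have hv : TensorAlgebra.ι R v = ∑ i, c.repr v i • TensorAlgebra.ι R (c i) := by
        conv_lhs => rw [← c.sum_repr v]
        rw [map_sum]
        simp [map_smul]
      rw [hv, map_sum]
      refine N.sum_mem fun i _ => ?_
      rw [map_smul]
      refine N.smul_mem _ ?_
      have : quadMk R V W (TensorAlgebra.ι R (c i)) = ofWord c W [i] := by simp [ofWord]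
      rw [this]
      exact allW [i]
    | mul a b iha ihb => rw [map_mul]; exact mulN _ iha _ ihb
    | add a b iha ihb => rw [map_add]; exact N.add_mem iha ihb
  have hsurj : Function.Surjective Φ := by
    intro y
    obtain ⟨x, rfl⟩ := RingQuot.mkAlgHom_surjective R (quadRel R V W) y
    have hx : quadMk R V W x ∈ N := htop x
    have hre : LinearMap.range Φ = N :=
      Finsupp.range_linearCombination R (v := fun w : {l : List ι // Nor p q l} => ofWord c W w.1)
    have hxr : quadMk R V W x ∈ LinearMap.range Φ := by rw [hre]; exact hx
    exact hxr
  exact Module.Free.of_equiv (LinearEquiv.ofBijective Φ ⟨hinj, hsurj⟩)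

end QuadAux

namespace QuadAux

lemma quad_zero {R : Type*} [CommRing R] {n : Type*} [Fintype n] [DecidableEq n]
    (A : Matrix n n R) (hskew : A.transpose = -A) (hdiag : ∀ i, A i i = 0) (x : n → R) :
    ∑ i, ∑ j, A i j * (x i * x j) = 0 := by
  rw [← Finset.sum_product']
  refine Finset.sum_ninvolution Prod.swap ?_ ?_ ?_ ?_
  · intro a
    have hAT : A a.2 a.1 = -A a.1 a.2 := by
      have h := congrFun (congrFun hskew a.1) a.2
      simpa [Matrix.transpose_apply, Matrix.neg_apply] using h
    show A a.1 a.2 * (x a.1 * x a.2) + A a.2 a.1 * (x a.2 * x a.1) = 0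
    rw [hAT]; ring
  · intro a hne0 hswap
    apply hne0
    have h12 : a.2 = a.1 := congrArg Prod.fst hswap
    show A a.1 a.2 * (x a.1 * x a.2) = 0
    rw [h12, hdiag, zero_mul]
  · intro a; simp
  · intro a; simp

end QuadAux

namespace QuadAux

set_option maxHeartbeats 1000000 in
theorem partB {R : Type*} [CommRing R] [IsDomain R] [IsPrincipalIdealRing R]
    {V : Type*} [AddCommGroup V] [Module R V]
    (m : ℕ) (b : Basis (Fin (m+1)) R V) (G : Matrix (Fin (m+1)) (Fin (m+1)) R)
    (hdet : IsUnit G.det) (hskew : G.transpose = -G) (hdiag : ∀ i, G i i = 0)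
    (r : V ⊗[R] V) (hr : r = ∑ i, ∑ j, G i j • (b i ⊗ₜ[R] b j)) :
    ∃ (k : ℕ) (c : Basis (Fin 2 ⊕ Fin k) R V) (G' : Fin 2 ⊕ Fin k → Fin 2 ⊕ Fin k → R),
      G' (Sum.inl 1) (Sum.inl 0) = 1 ∧ G' (Sum.inl 1) (Sum.inl 1) = 0 ∧
      r = ∑ i, ∑ j, G' i j • (c i ⊗ₜ[R] c j) := by
  classical
  set H := G⁻¹ with hH
  have hGH : G * H = 1 := Matrix.mul_nonsing_inv G hdet
  have hHG : H * G = 1 := Matrix.nonsing_inv_mul G hdet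
  have hHskew : H.transpose = -H := by
    rw [hH, Matrix.transpose_nonsing_inv, hskew]
    refine Matrix.inv_eq_right_inv ?_
    rw [neg_mul_neg]
    exact hGH
  have quadG : ∀ x : Fin (m+1) → R, ∑ i, ∑ j, G i j * (x i * x j) = 0 :=
    quad_zero G hskew hdiag
  have quadH : ∀ x : Fin (m+1) → R, ∑ i, ∑ j, H i j * (x i * x j) = 0 := by
    intro x
    set y := H.mulVec x with hy
    have hx : ∀ k, x k = ∑ l, G k l * y l := by
      intro k
      have hgy : G.mulVec y = x := by
        rw [hy, Matrix.mulVec_mulVec, hGH, Matrix.one_mulVec]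
      conv_lhs => rw [← hgy]
      simp [Matrix.mulVec, dotProduct]
    calc ∑ i, ∑ j, H i j * (x i * x j)
        = ∑ i, x i * (∑ j, H i j * x j) := by
          refine Finset.sum_congr rfl fun i _ => ?_
          rw [Finset.mul_sum]
          exact Finset.sum_congr rfl fun j _ => by ring
      _ = ∑ i, x i * y i := by
          refine Finset.sum_congr rfl fun i _ => ?_
          congr 1
      _ = ∑ i, (∑ l, G i l * y l) * y i := by
          refine Finset.sum_congr rfl fun i _ => by rw [← hx i]
      _ = ∑ i, ∑ l, G i l * (y i * y l) := by
          refine Finset.sum_congr rfl fun i _ => ?_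
          rw [Finset.sum_mul]
          exact Finset.sum_congr rfl fun l _ => by ring
      _ = 0 := quadG y
  have hdiagH : ∀ k0, H k0 k0 = 0 := by
    intro k0
    have h := quadH (fun k => if k = k0 then 1 else 0)
    calc H k0 k0
        = ∑ i, ∑ j, H i j * ((if i = k0 then (1:R) else 0) * (if j = k0 then 1 else 0)) := by
          simp [mul_ite, ite_mul, Finset.sum_ite_eq', mul_one, mul_zero, one_mul]
      _ = 0 := h
  set u := b 0 with hu
  set v : V := ∑ j, G j 0 • b j with hv
  set fu : V →ₗ[R] R :=
    (Finsupp.linearCombination R fun l => H 0 l) ∘ₗ (b.repr : V ≃ₗ[R] _).toLinearMap with hfu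
  set fv : V →ₗ[R] R :=
    (Finsupp.linearCombination R fun l => ∑ k, G k 0 * H k l) ∘ₗ
      (b.repr : V ≃ₗ[R] _).toLinearMap with hfv
  have hfub : ∀ j, fu (b j) = H 0 j := by
    intro j; simp [hfu, Finsupp.linearCombination_single]
  have hfvb : ∀ j, fv (b j) = ∑ k, G k 0 * H k j := by
    intro j; simp [hfv, Finsupp.linearCombination_single]
  have hfuu : fu u = 0 := by rw [hu, hfub]; exact hdiagH 0
  have hHG00 : ∑ j, H 0 j * G j 0 = 1 := by
    have h := congrFun (congrFun hHG 0) 0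
    rw [Matrix.mul_apply] at h
    simpa [Matrix.one_apply] using h
  have hfuv : fu v = 1 := by
    rw [hv, map_sum]
    calc ∑ j, fu (G j 0 • b j) = ∑ j, G j 0 * H 0 j := by
          refine Finset.sum_congr rfl fun j _ => ?_
          rw [map_smul, hfub, smul_eq_mul]
      _ = ∑ j, H 0 j * G j 0 := Finset.sum_congr rfl fun j _ => mul_comm _ _
      _ = 1 := hHG00
  have hfvu : fv u = -1 := by
    rw [hu, hfvb]
    calc ∑ k, G k 0 * H k 0
        = ∑ k, -(H 0 k * G k 0) := by
          refine Finset.sum_congr rfl fun k _ => ?_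
          have hk : H k 0 = -H 0 k := by
            have h := congrFun (congrFun hHskew 0) k
            simpa [Matrix.transpose_apply, Matrix.neg_apply] using h
          rw [hk]; ring
      _ = -∑ k, H 0 k * G k 0 := by rw [Finset.sum_neg_distrib]
      _ = -1 := by rw [hHG00]
  have hfvv : fv v = 0 := by
    rw [hv, map_sum]
    calc ∑ j, fv (G j 0 • b j)
        = ∑ j, ∑ k, H k j * (G k 0 * G j 0) := by
          refine Finset.sum_congr rfl fun j _ => ?_
          rw [map_smul, hfvb, smul_eq_mul, Finset.mul_sum]
          exact Finset.sum_congr rfl fun k _ => by ring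
      _ = ∑ k, ∑ j, H k j * (G k 0 * G j 0) := Finset.sum_comm
      _ = 0 := quadH (fun k => G k 0)
  -- the complement
  set φ : V →ₗ[R] R × R := fu.prod fv with hφ
  set Wk : Submodule R V := LinearMap.ker φ with hWk
  have hmemWk : ∀ x : V, x ∈ Wk ↔ fu x = 0 ∧ fv x = 0 := by
    intro x
    rw [hWk, LinearMap.mem_ker, hφ, LinearMap.prod_apply]
    constructor
    · intro h; exact ⟨congrArg Prod.fst h, congrArg Prod.snd h⟩
    · rintro ⟨h1, h2⟩; exact Prod.ext h1 h2
  set π : V →ₗ[R] V := fu.smulRight v - fv.smulRight u with hπ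
  have hπx : ∀ x : V, π x = fu x • v - fv x • u := fun x => by
    rw [hπ]; simp [LinearMap.sub_apply, LinearMap.smulRight_apply]
  have hπmem : ∀ x : V, x - π x ∈ Wk := by
    intro x
    rw [hmemWk]
    constructor
    · rw [map_sub, hπx, map_sub, map_smul, map_smul, hfuv, hfuu]
      simp
    · rw [map_sub, hπx, map_sub, map_smul, map_smul, hfvv, hfvu]
      simp
  set l1 : R × R →ₗ[R] V :=
    (LinearMap.fst R R R).smulRight u + (LinearMap.snd R R R).smulRight v with hl1
  set Gmap : (R × R) × Wk →ₗ[R] V := l1.coprod Wk.subtype with hGmap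
  set F : V →ₗ[R] (R × R) × Wk :=
    ((-fv).prod fu).prod ((LinearMap.id - π).codRestrict Wk (fun x => hπmem x)) with hF
  have hGF : Gmap ∘ₗ F = LinearMap.id := by
    apply LinearMap.ext
    intro x
    show l1 (-fv x, fu x) + (x - π x) = x
    rw [show l1 (-fv x, fu x) = (-fv x) • u + (fu x) • v from by
      rw [hl1]; simp [LinearMap.add_apply, LinearMap.smulRight_apply]]
    rw [hπx]
    module
  have hFG : F ∘ₗ Gmap = LinearMap.id := by
    apply LinearMap.ext
    rintro ⟨⟨a1, a2⟩, w⟩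
    obtain ⟨hw1, hw2⟩ := (hmemWk w.1).1 w.2
    have hx' : Gmap ((a1, a2), w) = a1 • u + a2 • v + w.1 := by
      rw [hGmap]
      show l1 (a1, a2) + w.1 = _
      rw [hl1]; simp [LinearMap.add_apply, LinearMap.smulRight_apply]
    have hfux : fu (a1 • u + a2 • v + w.1) = a2 := by
      rw [map_add, map_add, map_smul, map_smul, hfuu, hfuv, hw1]; simp
    have hfvx : fv (a1 • u + a2 • v + w.1) = -a1 := by
      rw [map_add, map_add, map_smul, map_smul, hfvu, hfvv, hw2]; simp
    show ((-fv (Gmap ((a1, a2), w)), fu (Gmap ((a1, a2), w))),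
        (⟨Gmap ((a1, a2), w) - π (Gmap ((a1, a2), w)), _⟩ : Wk)) = ((a1, a2), w)
    rw [hx', hfux, hfvx]
    refine Prod.ext (Prod.ext ?_ ?_) (Subtype.ext ?_)
    · simp
    · simp
    · show (a1 • u + a2 • v + w.1) - π (a1 • u + a2 • v + w.1) = w.1
      rw [hπx, hfux, hfvx]
      module
  set e : ((R × R) × Wk) ≃ₗ[R] V := LinearEquiv.ofLinear Gmap F hGF hFG with he
  -- free/finite instances
  haveI : Module.Finite R V := Module.Finite.of_basis b
  haveI : IsNoetherian R V := isNoetherian_of_isNoetherianRing_of_finite R V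
  haveI : NoZeroSMulDivisors R V := ⟨fun h => b.smul_eq_zero.1 h⟩
  set k := Module.finrank R Wk with hk
  set cW : Basis (Fin k) R Wk := Module.finBasis R Wk with hcW
  set c : Basis (Fin 2 ⊕ Fin k) R V := ((Basis.finTwoProd R).prod cW).map e with hc
  have hc0 : c (Sum.inl 0) = u := by
    rw [hc, Basis.map_apply]
    rw [show ((Basis.finTwoProd R).prod cW) (Sum.inl 0) = ((1, 0), 0) from by
      refine Prod.ext ?_ ?_
      · rw [Basis.prod_apply_inl_fst, Basis.finTwoProd_zero]
      · rw [Basis.prod_apply_inl_snd]]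
    rw [he]
    show Gmap ((1, 0), 0) = u
    rw [hGmap]
    show l1 (1, 0) + (0 : Wk).1 = u
    rw [hl1]; simp [LinearMap.add_apply, LinearMap.smulRight_apply]
  have hc1 : c (Sum.inl 1) = v := by
    rw [hc, Basis.map_apply]
    rw [show ((Basis.finTwoProd R).prod cW) (Sum.inl 1) = ((0, 1), 0) from by
      refine Prod.ext ?_ ?_
      · rw [Basis.prod_apply_inl_fst, Basis.finTwoProd_one]
      · rw [Basis.prod_apply_inl_snd]]
    rw [he]
    show Gmap ((0, 1), 0) = v
    rw [hGmap]
    show l1 (0, 1) + (0 : Wk).1 = v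
    rw [hl1]; simp [LinearMap.add_apply, LinearMap.smulRight_apply]
  have hcr : ∀ kk : Fin k, fu (c (Sum.inr kk)) = 0 := by
    intro kk
    rw [hc, Basis.map_apply]
    rw [show ((Basis.finTwoProd R).prod cW) (Sum.inr kk) = ((0 : R × R), cW kk) from by
      refine Prod.ext ?_ ?_
      · rw [Basis.prod_apply_inr_fst]
      · rw [Basis.prod_apply_inr_snd]]
    rw [he]
    show fu (Gmap (0, cW kk)) = 0
    rw [hGmap]
    show fu (l1 0 + (cW kk).1) = 0
    have hz : l1 0 + ((cW kk : Wk) : V) = ((cW kk : Wk) : V) := by rw [map_zero, zero_add]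
    rw [hz]
    exact ((hmemWk _).1 (cW kk).2).1
  have hfuc : ∀ i, fu (c i) = if i = Sum.inl 1 then 1 else 0 := by
    intro i
    match i with
    | Sum.inl 0 => rw [hc0]; simpa using hfuu
    | Sum.inl 1 => rw [hc1]; simpa using hfuv
    | Sum.inr kk => rw [hcr kk]; simp
  -- the coefficient matrix in the basis c
  set G' : (Fin 2 ⊕ Fin k) → (Fin 2 ⊕ Fin k) → R :=
    fun i j => ((c.tensorProduct c).repr r) (i, j) with hG'
  have hr' : r = ∑ i, ∑ j, G' i j • (c i ⊗ₜ[R] c j) := by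
    calc r = ∑ x : (Fin 2 ⊕ Fin k) × (Fin 2 ⊕ Fin k),
          ((c.tensorProduct c).repr r) x • (c.tensorProduct c) x :=
        ((c.tensorProduct c).sum_repr r).symm
      _ = ∑ i, ∑ j, G' i j • (c i ⊗ₜ[R] c j) := by
          rw [Fintype.sum_prod_type]
          refine Finset.sum_congr rfl fun i _ => Finset.sum_congr rfl fun j _ => ?_
          rw [hG', Basis.tensorProduct_apply]
  set Φf : V ⊗[R] V →ₗ[R] V := TensorProduct.lift ((LinearMap.lsmul R V) ∘ₗ fu) with hΦf
  have hΦft : ∀ x y : V, Φf (x ⊗ₜ[R] y) = fu x • y := by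
    intro x y; rw [hΦf]; simp
  have hA : Φf r = u := by
    rw [hr, map_sum]
    calc ∑ i, Φf (∑ j, G i j • (b i ⊗ₜ[R] b j))
        = ∑ i, ∑ j, (H 0 i * G i j) • b j := by
          refine Finset.sum_congr rfl fun i _ => ?_
          rw [map_sum]
          refine Finset.sum_congr rfl fun j _ => ?_
          rw [map_smul, hΦft, hfub, smul_smul, mul_comm]
      _ = ∑ j, ∑ i, (H 0 i * G i j) • b j := Finset.sum_comm
      _ = ∑ j, ((H * G) 0 j) • b j := by
          refine Finset.sum_congr rfl fun j _ => ?_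
          rw [← Finset.sum_smul, Matrix.mul_apply]
      _ = u := by
          rw [hHG, hu]
          have hstep : ∀ j : Fin (m+1),
              ((1 : Matrix (Fin (m+1)) (Fin (m+1)) R) 0 j) • b j
              = (if (0 : Fin (m+1)) = j then (1:R) else 0) • b j := by
            intro j; rw [Matrix.one_apply]
          rw [Finset.sum_congr rfl fun j _ => hstep j]
          simp [Finset.sum_ite_eq, ite_smul]
  have hB : Φf r = ∑ jj, G' (Sum.inl 1) jj • c jj := by
    conv_lhs => rw [hr']
    rw [map_sum]
    calc ∑ i, Φf (∑ j, G' i j • (c i ⊗ₜ[R] c j))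
        = ∑ i, if i = Sum.inl 1 then ∑ j, G' i j • c j else 0 := by
          refine Finset.sum_congr rfl fun i _ => ?_
          rw [map_sum]
          by_cases hi : i = Sum.inl 1
          · rw [if_pos hi]
            refine Finset.sum_congr rfl fun j _ => ?_
            rw [map_smul, hΦft, hfuc, if_pos hi, one_smul]
          · rw [if_neg hi]
            refine Finset.sum_eq_zero fun j _ => ?_
            rw [map_smul, hΦft, hfuc, if_neg hi, zero_smul, smul_zero]
      _ = ∑ jj, G' (Sum.inl 1) jj • c jj := by
          rw [Finset.sum_ite_eq' Finset.univ (Sum.inl 1)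
            (fun i => ∑ j, G' i j • c j)]
          simp
  have hkey : ∀ jj, G' (Sum.inl 1) jj = if jj = Sum.inl 0 then 1 else 0 := by
    have h1 : ∑ jj, G' (Sum.inl 1) jj • c jj = c (Sum.inl 0) := by
      rw [← hB, hA, hc0]
    intro jj
    have h2 := congrArg (fun z => c.repr z jj) h1
    simp only [map_sum, map_smul, Finsupp.finset_sum_apply, Finsupp.smul_apply,
      Basis.repr_self, Finsupp.single_apply, smul_eq_mul, mul_ite, mul_one, mul_zero] at h2
    rw [Finset.sum_ite_eq' Finset.univ jj (fun j => G' (Sum.inl 1) j)] at h2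
    simp only [Finset.mem_univ, if_true] at h2
    rw [h2]
    by_cases hj : jj = Sum.inl 0
    · rw [if_pos hj, if_pos hj.symm]
    · rw [if_neg hj, if_neg fun h => hj h.symm]
  exact ⟨k, c, G', by rw [hkey]; simp, by rw [hkey]; simp, hr'⟩

end QuadAux

namespace QuadAux

theorem caseZero {R : Type*} [CommRing R] {V : Type*} [AddCommGroup V] [Module R V]
    (b : Basis (Fin 0) R V) (r : V ⊗[R] V) (hr0 : r = 0) :
    Module.Free R (QuadAlg R V (Submodule.span R {r})) := by
  classical
  haveI : Module.Free R V := Module.Free.of_basis b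
  set W : Submodule R (V ⊗[R] V) := Submodule.span R {r} with hW
  have hrel : ∀ ⦃x y : TensorAlgebra R V⦄, quadRel R V W x y →
      (AlgHom.id R (TensorAlgebra R V)) x = (AlgHom.id R (TensorAlgebra R V)) y := by
    rintro x y ⟨⟨r', hm, rfl⟩, rfl⟩
    rcases Submodule.mem_span_singleton.1 hm with ⟨a, rfl⟩
    simp [hr0]
  let ψ := RingQuot.liftAlgHom R ⟨AlgHom.id R (TensorAlgebra R V), hrel⟩
  have key : ∀ z, ψ (quadMk R V W z) = z := by
    intro z
    show RingQuot.liftAlgHom R ⟨AlgHom.id R (TensorAlgebra R V), hrel⟩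
      (RingQuot.mkAlgHom R (quadRel R V W) z) = z
    rw [RingQuot.liftAlgHom_mkAlgHom_apply]
    rfl
  have hinj : Function.Injective (quadMk R V W) := by
    intro x y hxy
    rw [← key x, ← key y, hxy]
  have hsurj : Function.Surjective (quadMk R V W) :=
    RingQuot.mkAlgHom_surjective R _
  exact Module.Free.of_equiv
    (LinearEquiv.ofBijective (quadMk R V W).toLinearMap ⟨hinj, hsurj⟩)

end QuadAux

theorem quadAlg_free_of_antisymmetric (R : Type*) [CommRing R] [IsDomain R]
    [IsPrincipalIdealRing R] (V : Type*) [AddCommGroup V] [Module R V]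
    (m : ℕ) (b : Module.Basis (Fin m) R V) (G : Matrix (Fin m) (Fin m) R)
    (hdet : IsUnit G.det) (hskew : G.transpose = -G) (hdiag : ∀ i, G i i = 0)
    (r : V ⊗[R] V) (hr : r = ∑ i : Fin m, ∑ j : Fin m, G i j • (b i ⊗ₜ[R] b j)) :
    Module.Free R (QuadAlg R V (Submodule.span R {r})) := by
  classical
  cases m with
  | zero =>
    have hr0 : r = 0 := by simpa using hr
    exact QuadAux.caseZero b r hr0
  | succ m' =>
    obtain ⟨k, c, G', h1, h2, hr'⟩ := QuadAux.partB m' b G hdet hskew hdiag r hr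
    exact QuadAux.free_main (Sum.inl 1) (Sum.inl 0) (by simp) c G' h1 h2 r hr'
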